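/- arXiv:2605.20899 — 2 statements merged into one kernel-verified Lean document; each statement's English description precedes it below -/
import Mathlib

section
/- Let E(x) = (1/2)∫_{|x|}^∞ e^{−t}/t dt. For all y > 0, (e^{−y}/4)·log(1 + 2/y) ≤ E(y) ≤ (e^{−y}/2)·log(1 + 1/y). -/
open MeasureTheory

section Aux

open Set Real

private lemma exp_aux_mono {s : ℝ} (hs : 0 ≤ s) :
    (1 - s) * Real.exp s ≤ (1 + s) * Real.exp (-s) := by
  set h : ℝ → ℝ := fun t => (1 + t) * Real.exp (-t) - (1 - t) * Real.exp t with hh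
  have hd : ∀ t : ℝ, HasDerivAt h (t * (Real.exp t - Real.exp (-t))) t := by
    intro t
    have h1 : HasDerivAt (fun t : ℝ => (1 + t) * Real.exp (-t))
        (1 * Real.exp (-t) + (1 + t) * (Real.exp (-t) * (-1))) t :=
      (((hasDerivAt_id t).const_add 1).mul ((hasDerivAt_id t).neg.exp))
    have h2 : HasDerivAt (fun t : ℝ => (1 - t) * Real.exp t)
        ((-1) * Real.exp t + (1 - t) * Real.exp t) t := by
      have := ((hasDerivAt_id t).const_sub 1).mul (Real.hasDerivAt_exp t)
      exact this
    have := h1.sub h2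
    refine this.congr_deriv ?_
    ring
  have hmono : MonotoneOn h (Ici (0:ℝ)) := by
    apply monotoneOn_of_deriv_nonneg (convex_Ici 0)
    · exact fun t _ => (hd t).continuousAt.continuousWithinAt
    · exact fun t _ => ((hd t).differentiableAt).differentiableWithinAt
    · intro t ht
      rw [interior_Ici, mem_Ioi] at ht
      rw [(hd t).deriv]
      have : Real.exp (-t) ≤ Real.exp t := Real.exp_le_exp.2 (by linarith [le_of_lt ht])
      have ht' : (0:ℝ) ≤ t := le_of_lt ht
      nlinarith
  have h0 : h 0 = 0 := by simp [hh]
  have := hmono (self_mem_Ici) hs hs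
  rw [h0] at this
  simp only [hh] at this
  linarith

private lemma exp_int_aux (b : ℝ) (hb : 0 < b) :
    ∫ s in Ioi (0:ℝ), Real.exp (-(b*s)) = 1/b := by
  have h := MeasureTheory.integral_comp_mul_left_Ioi (fun t => Real.exp (-t)) 0 hb
  simp only [mul_zero, integral_exp_neg_Ioi, neg_zero, Real.exp_zero, smul_eq_mul, mul_one] at h
  rw [h]; simp [one_div]

private lemma inner_eval_aux (x c s : ℝ) (hs : 0 < s) :
    ∫ u in (0:ℝ)..c, Real.exp (-((x+u)*s)) =
      Real.exp (-(x*s)) * ((1 - Real.exp (-(c*s)))/s) := by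
  have hderiv : ∀ u : ℝ, HasDerivAt (fun u => -(Real.exp (-((x+u)*s)))/s)
      (Real.exp (-((x+u)*s))) u := by
    intro u
    have h1 : HasDerivAt (fun u : ℝ => -((x+u)*s)) (-s) u := by
      have := (((hasDerivAt_id u).const_add x).mul_const s).neg
      rw [one_mul] at this
      exact this
    have := (h1.exp).neg.div_const s
    refine this.congr_deriv ?_
    field_simp
  rw [intervalIntegral.integral_eq_sub_of_hasDerivAt (fun u _ => hderiv u)]
  · rw [show -((x+c)*s) = -(x*s) + -(c*s) by ring, Real.exp_add]
    field_simp
    ring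
  · apply Continuous.intervalIntegrable
    fun_prop

private lemma frullani_aux (x c : ℝ) (hx : 0 < x) (hc : 0 < c) :
    ∫ s in Ioi (0:ℝ), Real.exp (-(x*s)) * ((1 - Real.exp (-(c*s)))/s)
      = Real.log (1 + c/x) := by
  have hmeas : AEStronglyMeasurable (Function.uncurry fun u s => Real.exp (-((x+u)*s)))
      ((volume.restrict (Ioc 0 c)).prod (volume.restrict (Ioi 0))) := by
    apply Continuous.aestronglyMeasurable
    fun_prop
  have hint : Integrable (Function.uncurry fun u s => Real.exp (-((x+u)*s)))
      ((volume.restrict (Ioc 0 c)).prod (volume.restrict (Ioi 0))) := by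
    rw [MeasureTheory.integrable_prod_iff hmeas]
    constructor
    · filter_upwards [ae_restrict_mem measurableSet_Ioc] with u hu
      have hxu : 0 < x + u := by linarith [hu.1]
      refine (exp_neg_integrableOn_Ioi 0 hxu).congr ?_
      filter_upwards with s
      simp only [Function.uncurry]
      congr 1
      ring
    · have h1 : Integrable (fun u => 1/(x+u)) (volume.restrict (Ioc 0 c)) := by
        apply Integrable.mono' (g := fun _ => 1/x) (integrable_const _)
        · apply Measurable.aestronglyMeasurable; fun_prop
        · filter_upwards [ae_restrict_mem measurableSet_Ioc] with u hu
          have hxu : 0 < x + u := by linarith [hu.1]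
          rw [Real.norm_eq_abs, abs_of_pos (by positivity)]
          exact one_div_le_one_div_of_le hx (by linarith [hu.1])
      refine h1.congr ?_
      filter_upwards [ae_restrict_mem measurableSet_Ioc] with u hu
      have hxu : 0 < x + u := by linarith [hu.1]
      have : (∫ y in Ioi (0:ℝ), ‖Function.uncurry (fun u s => Real.exp (-((x+u)*s))) (u, y)‖)
          = ∫ y in Ioi (0:ℝ), Real.exp (-((x+u)*y)) := by
        apply integral_congr_ae
        filter_upwards with yy
        simp [Function.uncurry, Real.norm_eq_abs, abs_of_pos (Real.exp_pos _)]
      rw [this, exp_int_aux _ hxu]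
  have swap := MeasureTheory.integral_integral_swap hint
  have lhs_eq : (∫ u in Ioc (0:ℝ) c, ∫ s in Ioi (0:ℝ), Real.exp (-((x+u)*s)))
      = Real.log (1 + c/x) := by
    have hcong : ∀ u ∈ Ioc (0:ℝ) c,
        (∫ s in Ioi (0:ℝ), Real.exp (-((x+u)*s))) = (x+u)⁻¹ := by
      intro u hu
      rw [exp_int_aux _ (by linarith [hu.1] : (0:ℝ) < x + u), one_div]
    rw [setIntegral_congr_fun measurableSet_Ioc hcong,
      ← intervalIntegral.integral_of_le hc.le]
    have h2 : (∫ u in (0:ℝ)..c, (x+u)⁻¹) = ∫ v in (x+0)..(x+c), v⁻¹ :=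
      intervalIntegral.integral_comp_add_left (fun v => v⁻¹) x
    rw [h2, add_zero, integral_inv_of_pos hx (by linarith)]
    congr 1
    field_simp
  have rhs_eq : (∫ s in Ioi (0:ℝ), ∫ u in Ioc (0:ℝ) c, Real.exp (-((x+u)*s)))
      = ∫ s in Ioi (0:ℝ), Real.exp (-(x*s)) * ((1 - Real.exp (-(c*s)))/s) := by
    apply setIntegral_congr_fun measurableSet_Ioi
    intro s hs
    dsimp only
    rw [← intervalIntegral.integral_of_le hc.le]
    exact inner_eval_aux x c s hs
  rw [← rhs_eq, ← swap, lhs_eq]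

private lemma shift_Ioi_aux (f : ℝ → ℝ) :
    ∫ t in Ioi (1:ℝ), f t = ∫ s in Ioi (0:ℝ), f (s + 1) := by
  have h := (measurePreserving_add_right (volume : Measure ℝ) 1).setIntegral_preimage_emb
    (MeasurableEquiv.addRight (1:ℝ)).measurableEmbedding f (Ioi 1)
  rw [← h]
  congr 1
  ext x
  simp

private lemma E1_repr_aux (x : ℝ) (hx : 0 < x) :
    ∫ t in Ioi x, Real.exp (-t)/t
      = Real.exp (-x) * ∫ s in Ioi (0:ℝ), Real.exp (-(x*s))/(1+s) := by
  have h1 := MeasureTheory.integral_comp_mul_left_Ioi (fun t => Real.exp (-t)/t) 1 hx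
  simp only [mul_one, smul_eq_mul] at h1
  have h2 : (∫ t in Ioi x, Real.exp (-t)/t)
      = x * ∫ s in Ioi (1:ℝ), Real.exp (-(x*s))/(x*s) := by
    rw [h1]
    field_simp
  rw [h2, ← integral_const_mul]
  have h3 : (∫ s in Ioi (1:ℝ), x * (Real.exp (-(x*s))/(x*s)))
      = ∫ s in Ioi (1:ℝ), Real.exp (-(x*s))/s := by
    apply setIntegral_congr_fun measurableSet_Ioi
    intro s hs
    have hs0 : (0:ℝ) < s := lt_trans one_pos hs
    field_simp
  rw [h3, shift_Ioi_aux (fun s => Real.exp (-(x*s))/s), ← integral_const_mul]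
  apply setIntegral_congr_fun measurableSet_Ioi
  intro s hs
  have hs0 : (0:ℝ) < s := hs
  dsimp only
  rw [show -(x*(s+1)) = -x + -(x*s) by ring, Real.exp_add]
  rw [mul_div_assoc]
  ring_nf

end Aux

/-- The normalized exponential integral `E(x) = (1/2)∫_{|x|}^∞ e^{-t}/t dt`. -/
noncomputable def Enorm (x : ℝ) : ℝ := (1 / 2) * ∫ t in Set.Ioi |x|, Real.exp (-t) / t

theorem Enorm_log_bounds (y : ℝ) (hy : 0 < y) :
    Real.exp (-y) / 4 * Real.log (1 + 2 / y) ≤ Enorm y ∧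
    Enorm y ≤ Real.exp (-y) / 2 * Real.log (1 + 1 / y) := by
  open Set Real in
  have hEnorm : Enorm y = (1/2) * (Real.exp (-y) *
      ∫ s in Ioi (0:ℝ), Real.exp (-(y*s))/(1+s)) := by
    unfold Enorm
    rw [abs_of_pos hy, E1_repr_aux y hy]
  set K : ℝ := ∫ s in Set.Ioi (0:ℝ), Real.exp (-(y*s))/(1+s) with hK
  -- integrability facts
  have base : IntegrableOn (fun s => Real.exp (-(y*s))) (Set.Ioi (0:ℝ)) := by
    refine (exp_neg_integrableOn_Ioi 0 hy).congr ?_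
    filter_upwards with s
    congr 1
    ring
  have IK : IntegrableOn (fun s => Real.exp (-(y*s))/(1+s)) (Set.Ioi (0:ℝ)) := by
    apply Integrable.mono' base
    · apply Measurable.aestronglyMeasurable; fun_prop
    · filter_upwards [ae_restrict_mem measurableSet_Ioi] with s hs
      have hs0 : (0:ℝ) < s := hs
      rw [Real.norm_eq_abs, abs_of_pos (by positivity)]
      apply div_le_self (Real.exp_pos _).le
      linarith
  have IJ : ∀ c : ℝ, 0 < c → IntegrableOn
      (fun s => Real.exp (-(y*s)) * ((1 - Real.exp (-(c*s)))/s)) (Set.Ioi (0:ℝ)) := by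
    intro c hc
    apply Integrable.mono' (base.const_mul c)
    · apply Measurable.aestronglyMeasurable; fun_prop
    · filter_upwards [ae_restrict_mem measurableSet_Ioi] with s hs
      have hs0 : (0:ℝ) < s := hs
      have hb : Real.exp (-(c*s)) ≤ 1 := by
        rw [Real.exp_le_one_iff]
        nlinarith
      have hfrac : (1 - Real.exp (-(c*s)))/s ≤ c := by
        rw [div_le_iff₀ hs0]
        nlinarith [Real.add_one_le_exp (-(c*s))]
      rw [Real.norm_eq_abs, abs_of_nonneg
        (mul_nonneg (Real.exp_pos _).le (div_nonneg (by linarith) hs0.le))]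
      calc Real.exp (-(y*s)) * ((1 - Real.exp (-(c*s)))/s)
          ≤ Real.exp (-(y*s)) * c :=
            mul_le_mul_of_nonneg_left hfrac (Real.exp_pos _).le
        _ = c * Real.exp (-(y*s)) := by ring
  -- upper bound : K ≤ log (1 + 1/y)
  have hup : K ≤ Real.log (1 + 1/y) := by
    rw [← frullani_aux y 1 hy one_pos, hK]
    apply setIntegral_mono_on IK (IJ 1 one_pos) measurableSet_Ioi
    intro s hs
    have hs0 : (0:ℝ) < s := hs
    have hs1 : (0:ℝ) < 1 + s := by linarith
    have hmul : Real.exp s * Real.exp (-s) = 1 := by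
      rw [← Real.exp_add]; simp
    have h1 : (1+s) * Real.exp (-s) ≤ 1 := by
      nlinarith [Real.add_one_le_exp s, Real.exp_pos (-s)]
    have key : 1/(1+s) ≤ (1 - Real.exp (-(1*s)))/s := by
      rw [one_mul, div_le_div_iff₀ hs1 hs0]
      nlinarith
    calc Real.exp (-(y*s))/(1+s) = Real.exp (-(y*s)) * (1/(1+s)) := by ring
      _ ≤ Real.exp (-(y*s)) * ((1 - Real.exp (-(1*s)))/s) :=
          mul_le_mul_of_nonneg_left key (Real.exp_pos _).le
  -- lower bound : (1/2) * log (1 + 2/y) ≤ K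
  have hlow : (1/2) * Real.log (1 + 2/y) ≤ K := by
    rw [← frullani_aux y 2 hy two_pos, hK, ← integral_const_mul]
    apply setIntegral_mono_on ((IJ 2 two_pos).const_mul (1/2)) IK measurableSet_Ioi
    intro s hs
    have hs0 : (0:ℝ) < s := hs
    have hs1 : (0:ℝ) < 1 + s := by linarith
    have hmul : Real.exp s * Real.exp (-s) = 1 := by
      rw [← Real.exp_add]; simp
    have hsq : Real.exp (-s) * Real.exp (-s) = Real.exp (-(2*s)) := by
      rw [← Real.exp_add]; congr 1; ring
    have h2 : 1 - s ≤ (1+s) * Real.exp (-(2*s)) := by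
      nlinarith [exp_aux_mono hs0.le, Real.exp_pos (-s), Real.exp_pos s]
    have key2 : (1 - Real.exp (-(2*s))) * (1+s) ≤ 2*s := by nlinarith
    have hE := Real.exp_pos (-(y*s))
    rw [show (1:ℝ)/2 * (Real.exp (-(y*s)) * ((1 - Real.exp (-(2*s)))/s))
        = Real.exp (-(y*s)) * (1 - Real.exp (-(2*s))) / (2*s) by ring,
      div_le_div_iff₀ (by positivity) hs1]
    nlinarith
  refine ⟨?_, ?_⟩
  · rw [hEnorm]
    nlinarith [Real.exp_pos (-y), hlow]
  · rw [hEnorm]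
    nlinarith [Real.exp_pos (-y), hup]
end

section
/- Entropy lower bound via singular values: let T be a compact operator between Hilbert spaces Z and X with singular values σ₁ ≥ σ₂ ≥ … > 0, let t > 0 and m = #{k : σ_k ≥ 2t}. Then log N(T(B₁), t) ≥ Σ_{k=1}^{m} log(σ_k / t), where B₁ is the closed unit ball of Z and N denotes the covering number in the norm of X. -/
open scoped RealInnerProductSpace

-- Aux 1: isometric embedding of Euclidean space via an orthonormal family
lemma exists_isometry_of_orthonormal {X : Type*} [NormedAddCommGroup X]
    [InnerProductSpace ℝ X] (m : ℕ) (ψ : ℕ → X) (hψ : Orthonormal ℝ ψ) :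
    ∃ f : EuclideanSpace ℝ (Fin m) →ₗᵢ[ℝ] X,
      ∀ x : EuclideanSpace ℝ (Fin m), f x = ∑ i : Fin m, x i • ψ (i : ℕ) := by
  classical
  set v := (EuclideanSpace.basisFun (Fin m) ℝ).toBasis with hvdef
  have hv : Orthonormal ℝ v := by
    rw [hvdef, OrthonormalBasis.coe_toBasis]
    exact (EuclideanSpace.basisFun (Fin m) ℝ).orthonormal
  set g : EuclideanSpace ℝ (Fin m) →ₗ[ℝ] X := v.constr ℝ (fun i : Fin m => ψ (i : ℕ)) with hgdef
  have hcomp : ⇑g ∘ ⇑v = fun i : Fin m => ψ (i : ℕ) := by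
    funext i
    simp [hgdef, Module.Basis.constr_basis]
  have horth : Orthonormal ℝ (⇑g ∘ ⇑v) := by
    rw [hcomp]
    exact hψ.comp _ Fin.val_injective
  refine ⟨g.isometryOfOrthonormal hv horth, ?_⟩
  intro x
  rw [LinearMap.coe_isometryOfOrthonormal]
  rw [hgdef, Module.Basis.constr_apply_fintype]
  rfl

-- Aux 2: Pythagoras for the orthogonal projection
lemma norm_sub_orthogonalProjection_le {X : Type*} [NormedAddCommGroup X]
    [InnerProductSpace ℝ X] (K : Submodule ℝ X) [K.HasOrthogonalProjection]
    {u : X} (hu : u ∈ K) (c : X) :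
    ‖u - (K.orthogonalProjection c : X)‖ ≤ ‖u - c‖ := by
  set w : X := (K.orthogonalProjection c : X) with hw
  have hmem : c - w ∈ Kᗮ := Submodule.sub_starProjection_mem_orthogonal (K:=K) c
  have huw : u - w ∈ K := K.sub_mem hu (K.orthogonalProjection c).2
  have hinner : ⟪u - w, c - w⟫ = 0 := hmem (u - w) huw
  have hexp : ‖u - c‖ ^ 2 = ‖u - w‖ ^ 2 + ‖c - w‖ ^ 2 := by
    have : u - c = (u - w) - (c - w) := by abel
    rw [this, norm_sub_sq_real, hinner]
    ring
  nlinarith [norm_nonneg (u - c), norm_nonneg (u - w), norm_nonneg (c - w)]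

theorem entropy_lower_bound_of_svd {Z X : Type*}
    [NormedAddCommGroup Z] [InnerProductSpace ℝ Z]
    [NormedAddCommGroup X] [InnerProductSpace ℝ X]
    (T : Z →L[ℝ] X) (hT : IsCompactOperator (⇑T))
    (φ : ℕ → Z) (ψ : ℕ → X) (σ : ℕ → ℝ)
    (hφ : Orthonormal ℝ φ) (hψ : Orthonormal ℝ ψ)
    (hσpos : ∀ k, 0 < σ k) (hσanti : Antitone σ)
    (hSVD : ∀ z : Z, T z = ∑' k : ℕ, (σ k * (inner ℝ (φ k) z : ℝ)) • ψ k)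
    (t : ℝ) (ht : 0 < t)
    (m : ℕ) (hm : ∀ k : ℕ, 2 * t ≤ σ k ↔ k < m)
    -- every finite cover of `T(B₁)` by open balls of radius `t` has at least
    -- `∏_{k<m} σ_k/t` elements, i.e. `log N(T(B₁), t) ≥ ∑_{k<m} log(σ_k/t)`
    (s : Finset X) (hcover : T '' Metric.closedBall 0 1 ⊆ ⋃ x ∈ s, Metric.ball x t) :
    ∑ k ∈ Finset.range m, Real.log (σ k / t) ≤ Real.log s.card := by
  classical
  -- `s` is nonempty
  have h0mem : (0 : X) ∈ T '' Metric.closedBall 0 1 :=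
    ⟨0, by simp, by simp⟩
  obtain ⟨c₀, hc₀s, -⟩ := Set.mem_iUnion₂.mp (hcover h0mem)
  have hsne : s.Nonempty := ⟨c₀, hc₀s⟩
  have hcard1 : (1 : ℝ) ≤ (s.card : ℝ) := by exact_mod_cast hsne.card_pos
  rcases Nat.eq_zero_or_pos m with hm0 | hmpos
  · subst hm0
    simpa using Real.log_nonneg hcard1
  -- the Euclidean model space
  set E := EuclideanSpace ℝ (Fin m) with hE
  haveI : Nonempty (Fin m) := ⟨⟨0, hmpos⟩⟩
  haveI : Nontrivial E := by
    refine ⟨0, EuclideanSpace.single ⟨0, hmpos⟩ 1, ?_⟩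
    intro h
    have := congrFun (congrArg (fun (y : E) => (y : Fin m → ℝ)) h) ⟨0, hmpos⟩
    simp only [EuclideanSpace.single_apply, if_pos rfl] at this
    exact zero_ne_one this
  obtain ⟨fψ, hfψ⟩ := exists_isometry_of_orthonormal m ψ hψ
  obtain ⟨fφ, hfφ⟩ := exists_isometry_of_orthonormal m φ hφ
  set v := (EuclideanSpace.basisFun (Fin m) ℝ).toBasis with hvdef
  -- the diagonal map
  set L : E →ₗ[ℝ] E := v.constr ℝ (fun i : Fin m => σ (i : ℕ) • v i) with hLdef
  have hLapply : ∀ x : E, L x = ∑ i : Fin m, x i • σ (i : ℕ) • v i := by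
    intro x
    rw [hLdef, Module.Basis.constr_apply_fintype]
    rfl
  have hfψv : ∀ i : Fin m, fψ (v i) = ψ (i : ℕ) := by
    intro i
    rw [hfψ]
    have : ∀ j : Fin m, (v i : E) j = if j = i then 1 else 0 := by
      intro j
      rw [hvdef]
      simp [OrthonormalBasis.coe_toBasis, EuclideanSpace.basisFun_apply,
        EuclideanSpace.single_apply]
    simp only [this]
    simp
  have hfψL : ∀ x : E, fψ (L x) = ∑ i : Fin m, (σ (i : ℕ) * x i) • ψ (i : ℕ) := by
    intro x
    rw [hLapply, map_sum]
    refine Finset.sum_congr rfl fun i _ => ?_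
    rw [LinearIsometry.map_smul, LinearIsometry.map_smul, hfψv, smul_smul, mul_comm]
  -- determinant of L
  have hdet : LinearMap.det L = ∏ i : Fin m, σ (i : ℕ) := by
    rw [← LinearMap.det_toMatrix v L]
    have : LinearMap.toMatrix v v L = Matrix.diagonal (fun i : Fin m => σ (i : ℕ)) := by
      ext i j
      rw [LinearMap.toMatrix_apply, hLdef, Module.Basis.constr_basis]
      rcases eq_or_ne i j with h | h
      · subst h; simp [Matrix.diagonal]
      · simp [Matrix.diagonal, h, Module.Basis.repr_self, Finsupp.single_apply, Ne.symm h]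
    rw [this, Matrix.det_diagonal]
  -- image of the unit ball under L followed by fψ lands in T(B₁)
  have hinclusion : ∀ x : E, x ∈ Metric.closedBall (0 : E) 1 →
      fψ (L x) ∈ T '' Metric.closedBall (0 : Z) 1 := by
    intro x hx
    refine ⟨fφ x, ?_, ?_⟩
    · rw [Metric.mem_closedBall, dist_zero_right, fφ.norm_map]
      rwa [Metric.mem_closedBall, dist_zero_right] at hx
    · -- compute T (fφ x)
      have hinner : ∀ k : ℕ, (inner ℝ (φ k) (fφ x) : ℝ)
          = if h : k < m then x ⟨k, h⟩ else 0 := by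
        intro k
        rw [hfφ, inner_sum]
        simp only [real_inner_smul_right]
        have horth := orthonormal_iff_ite.mp hφ
        by_cases h : k < m
        · rw [dif_pos h]
          rw [Finset.sum_eq_single (⟨k, h⟩ : Fin m)]
          · rw [horth, if_pos rfl, mul_one]
          · intro i _ hi
            rw [horth, if_neg, mul_zero]
            intro hk
            exact hi (by ext; simp [← hk])
          · intro hmem; exact absurd (Finset.mem_univ _) hmem
        · rw [dif_neg h]
          refine Finset.sum_eq_zero fun i _ => ?_
          rw [horth, if_neg, mul_zero]
          intro hk
          exact h (hk ▸ i.isLt)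
      set g : ℕ → X := fun k => if h : k < m then (σ k * x ⟨k, h⟩) • ψ k else 0 with hgdef
      have hterm : (fun k : ℕ => (σ k * (inner ℝ (φ k) (fφ x) : ℝ)) • ψ k) = g := by
        funext k
        by_cases h : k < m
        · simp only [hinner, hgdef, dif_pos h]
        · simp only [hinner, hgdef, dif_neg h, mul_zero, zero_smul]
      rw [hSVD, hterm]
      have htsum : ∑' k : ℕ, g k = ∑ k ∈ Finset.range m, g k := by
        refine tsum_eq_sum fun k hk => ?_
        have h : ¬ k < m := by simpa using hk
        simp only [hgdef, dif_neg h]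
      rw [htsum, hfψL]
      rw [← Fin.sum_univ_eq_sum_range g m]
      refine Finset.sum_congr rfl fun i _ => ?_
      simp only [hgdef, dif_pos i.isLt, Fin.eta]
  -- the range of fψ and the projection
  set K : Submodule ℝ X := LinearMap.range fψ.toLinearMap with hKdef
  haveI : FiniteDimensional ℝ K := fψ.toLinearMap.finiteDimensional_range
  haveI : K.HasOrthogonalProjection := Submodule.HasOrthogonalProjection.ofCompleteSpace K
  have hproj : ∀ c : X, ∃ y : E, fψ y = (K.orthogonalProjection c : X) := by
    intro c
    exact (K.orthogonalProjection c).2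
  choose g hg using hproj
  -- covering of the ellipsoid D by balls of radius t in E
  set D : Set E := L '' Metric.closedBall (0 : E) 1 with hDdef
  have hDcover : D ⊆ ⋃ c ∈ s, Metric.ball (g c) t := by
    rintro y ⟨x, hx, rfl⟩
    have hmem := hcover (hinclusion x hx)
    obtain ⟨c, hcs, hc⟩ := Set.mem_iUnion₂.mp hmem
    refine Set.mem_iUnion₂.mpr ⟨c, hcs, ?_⟩
    rw [Metric.mem_ball] at hc ⊢
    have hKmem : fψ (L x) ∈ K := ⟨L x, rfl⟩
    have h1 : ‖fψ (L x) - (K.orthogonalProjection c : X)‖ ≤ ‖fψ (L x) - c‖ :=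
      norm_sub_orthogonalProjection_le K hKmem c
    calc dist (L x) (g c) = ‖fψ (L x - g c)‖ := by rw [dist_eq_norm, fψ.norm_map]
      _ = ‖fψ (L x) - (K.orthogonalProjection c : X)‖ := by rw [map_sub, hg]
      _ ≤ ‖fψ (L x) - c‖ := h1
      _ < t := by rwa [← dist_eq_norm]
  -- volume comparison
  have hμD : MeasureTheory.volume D
      = ENNReal.ofReal (∏ i : Fin m, σ (i : ℕ)) * MeasureTheory.volume (Metric.closedBall (0 : E) 1) := by
    rw [hDdef, MeasureTheory.Measure.addHaar_image_linearMap, hdet]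
    congr 1
    have hpos : (0:ℝ) < ∏ i : Fin m, σ (i : ℕ) := Finset.prod_pos fun i _ => hσpos _
    rw [abs_of_pos hpos]
  have hμcover : MeasureTheory.volume D
      ≤ (s.card : ENNReal) * (ENNReal.ofReal (t ^ m) * MeasureTheory.volume (Metric.closedBall (0 : E) 1)) := by
    calc MeasureTheory.volume D ≤ MeasureTheory.volume (⋃ c ∈ s, Metric.ball (g c) t) :=
          MeasureTheory.measure_mono hDcover
      _ ≤ ∑ c ∈ s, MeasureTheory.volume (Metric.ball (g c) t) :=
          MeasureTheory.measure_biUnion_finset_le s _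
      _ ≤ ∑ c ∈ s, (ENNReal.ofReal (t ^ m) * MeasureTheory.volume (Metric.closedBall (0 : E) 1)) := by
          refine Finset.sum_le_sum fun c _ => ?_
          rw [MeasureTheory.Measure.addHaar_ball _ _ ht.le]
          rw [finrank_euclideanSpace_fin]
          exact mul_le_mul_right (MeasureTheory.measure_mono Metric.ball_subset_closedBall) _
      _ = (s.card : ENNReal) * (ENNReal.ofReal (t ^ m) * MeasureTheory.volume (Metric.closedBall (0 : E) 1)) := by
          rw [Finset.sum_const, nsmul_eq_mul]
  -- cancel the volume of the unit ball
  set V := MeasureTheory.volume (Metric.closedBall (0 : E) 1) with hVdef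
  have hV0 : V ≠ 0 := (Metric.measure_closedBall_pos _ _ one_pos).ne'
  have hVtop : V ≠ ⊤ := MeasureTheory.measure_closedBall_lt_top.ne
  have hkey : ENNReal.ofReal (∏ i : Fin m, σ (i : ℕ))
      ≤ (s.card : ENNReal) * ENNReal.ofReal (t ^ m) := by
    have h := hμD ▸ hμcover
    rw [← mul_assoc] at h
    exact (ENNReal.mul_le_mul_iff_left hV0 hVtop).mp h
  -- back to real numbers
  have hprod : ∏ i : Fin m, σ (i : ℕ) ≤ (s.card : ℝ) * t ^ m := by
    have h2 : ((s.card : ENNReal) * ENNReal.ofReal (t ^ m))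
        = ENNReal.ofReal ((s.card : ℝ) * t ^ m) := by
      rw [ENNReal.ofReal_mul (by positivity)]
      congr 1
      exact (ENNReal.ofReal_natCast _).symm
    rw [h2] at hkey
    exact (ENNReal.ofReal_le_ofReal_iff (by positivity)).mp hkey
  have hprodrange : ∏ k ∈ Finset.range m, σ k ≤ (s.card : ℝ) * t ^ m := by
    rwa [← Fin.prod_univ_eq_prod_range]
  have hlog : ∑ k ∈ Finset.range m, Real.log (σ k / t)
      = Real.log (∏ k ∈ Finset.range m, (σ k / t)) := by
    rw [Real.log_prod]
    intro k _
    exact (div_pos (hσpos k) ht).ne'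
  rw [hlog]
  have hdiv : ∏ k ∈ Finset.range m, (σ k / t) = (∏ k ∈ Finset.range m, σ k) / t ^ m := by
    rw [Finset.prod_div_distrib, Finset.prod_const, Finset.card_range]
  have hle : ∏ k ∈ Finset.range m, (σ k / t) ≤ (s.card : ℝ) := by
    rw [hdiv, div_le_iff₀ (by positivity)]
    exact hprodrange
  exact Real.log_le_log (Finset.prod_pos fun k _ => div_pos (hσpos k) ht) hle
end
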